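/- Let η, ξ : [0,L] → ℝ be continuous, and suppose there is a continuously differentiable function R : [0,L] → ℝ with ξ(y) = R(y)η(y) for all y, such that R'(y) ≥ 0 on [0,L] and R(L) ≤ 0. Then for every continuous g : [0,L] → ℂ, the bilinear form B(g,g) = 2∫₀^L ∫₀^y ξ(y)η(z)Re(conj(g(z))·g(y)) dz dy satisfies B(g,g) ≤ 0. -/

import Mathlib

open Real Set MeasureTheory intervalIntegral

theorem bilinear_form_nonpositive (L : ℝ) (hL : 0 < L)
    (eta xi R R' : ℝ → ℝ)
    (heta : ContinuousOn eta (Set.Icc 0 L))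
    (hxi : ContinuousOn xi (Set.Icc 0 L))
    (hR : ∀ y ∈ Set.Icc (0:ℝ) L, HasDerivAt R (R' y) y)
    (hR' : ContinuousOn R' (Set.Icc 0 L))
    (hfac : ∀ y ∈ Set.Icc (0:ℝ) L, xi y = R y * eta y)
    (hmono : ∀ y ∈ Set.Icc (0:ℝ) L, 0 ≤ R' y)
    (hRL : R L ≤ 0)
    (g : ℝ → ℂ) (hg : ContinuousOn g (Set.Icc 0 L)) :
    2 * ∫ y in (0:ℝ)..L, ∫ z in (0:ℝ)..y,
        xi y * eta z * ((starRingEnd ℂ) (g z) * g y).re ≤ 0 := by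
  have hL' : (0:ℝ) ≤ L := hL.le
  -- continuous extensions of eta and g
  set et : ℝ → ℝ := Set.IccExtend hL' ((Set.Icc 0 L).restrict eta) with het_def
  set gt : ℝ → ℂ := Set.IccExtend hL' ((Set.Icc 0 L).restrict g) with hgt_def
  have het_cont : Continuous et := heta.restrict.Icc_extend'
  have hgt_cont : Continuous gt := hg.restrict.Icc_extend'
  have het_eq : ∀ x ∈ Set.Icc (0:ℝ) L, et x = eta x := fun x hx => by
    simp [het_def, Set.IccExtend_of_mem hL' _ hx]
    rfl
  have hgt_eq : ∀ x ∈ Set.Icc (0:ℝ) L, gt x = g x := fun x hx => by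
    simp [hgt_def, Set.IccExtend_of_mem hL' _ hx]
    rfl
  -- h = et * gt, F its primitive
  set h : ℝ → ℂ := fun x => (et x : ℂ) * gt x with hh_def
  have hh_cont : Continuous h := (Complex.continuous_ofReal.comp het_cont).mul hgt_cont
  set F : ℝ → ℂ := fun y => ∫ t in (0:ℝ)..y, h t with hF_def
  have hF_deriv : ∀ y : ℝ, HasDerivAt F (h y) y := fun y =>
    intervalIntegral.integral_hasDerivAt_right (hh_cont.intervalIntegrable _ _)
      (hh_cont.stronglyMeasurableAtFilter _ _) hh_cont.continuousAt
  have hF_cont : Continuous F :=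
    continuous_iff_continuousAt.2 fun y => (hF_deriv y).continuousAt
  -- φ = |F|² and its derivative
  set φ : ℝ → ℝ := fun y => Complex.normSq (F y) with hφ_def
  set φd : ℝ → ℝ := fun y => 2 * ((starRingEnd ℂ) (F y) * h y).re with hφd_def
  have hφ_deriv : ∀ y : ℝ, HasDerivAt φ (φd y) y := by
    intro y
    have hre : HasDerivAt (fun y => (F y).re) ((h y).re) y :=
      Complex.reCLM.hasFDerivAt.comp_hasDerivAt y (hF_deriv y)
    have him : HasDerivAt (fun y => (F y).im) ((h y).im) y :=
      Complex.imCLM.hasFDerivAt.comp_hasDerivAt y (hF_deriv y)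
    have H : HasDerivAt (fun y => (F y).re * (F y).re + (F y).im * (F y).im) _ y :=
      (hre.mul hre).add (him.mul him)
    have heq : φ = fun y => (F y).re * (F y).re + (F y).im * (F y).im := by
      funext x; simp [hφ_def, Complex.normSq_apply]
    rw [heq]
    convert H using 1
    simp only [hφd_def, Complex.mul_re, Complex.conj_re, Complex.conj_im]
    ring
  have hφd_cont : Continuous φd := by
    apply continuous_const.mul
    exact (Complex.continuous_re.comp
      ((Complex.continuous_conj.comp hF_cont).mul hh_cont))
  have hφ_cont : Continuous φ := Complex.continuous_normSq.comp hF_cont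
  -- the inner integral
  have inner_eq : ∀ y ∈ Set.Icc (0:ℝ) L,
      (∫ z in (0:ℝ)..y, xi y * eta z * ((starRingEnd ℂ) (g z) * g y).re)
        = R y * φd y / 2 := by
    intro y hy
    have hsub : Set.uIcc (0:ℝ) y ⊆ Set.Icc 0 L := by
      rw [Set.uIcc_of_le hy.1]; exact Set.Icc_subset_Icc le_rfl hy.2
    have step1 : (∫ z in (0:ℝ)..y, xi y * eta z * ((starRingEnd ℂ) (g z) * g y).re)
        = ∫ z in (0:ℝ)..y, xi y * (h z * (starRingEnd ℂ) (g y)).re := by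
      apply intervalIntegral.integral_congr
      intro z hz
      have hz' := hsub hz
      simp only [hh_def, het_eq z hz', hgt_eq z hz']
      simp only [Complex.mul_re, Complex.conj_re, Complex.conj_im,
        Complex.mul_im, Complex.ofReal_re, Complex.ofReal_im]
      ring
    rw [step1, intervalIntegral.integral_const_mul]
    have step2 : (∫ z in (0:ℝ)..y, (h z * (starRingEnd ℂ) (g y)).re)
        = (F y * (starRingEnd ℂ) (g y)).re := by
      have hint : IntervalIntegrable (fun z => h z * (starRingEnd ℂ) (g y))
          volume 0 y := (hh_cont.mul continuous_const).intervalIntegrable _ _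
      have := Complex.reCLM.intervalIntegral_comp_comm hint
      simp only [Complex.reCLM_apply] at this
      rw [this, intervalIntegral.integral_mul_const]
    rw [step2]
    -- now a pointwise algebraic identity
    have hhy : h y = (eta y : ℂ) * g y := by
      simp only [hh_def, het_eq y hy, hgt_eq y hy]
    simp only [hφd_def, hhy, hfac y hy]
    simp only [Complex.mul_re, Complex.conj_re, Complex.conj_im,
      Complex.mul_im, Complex.ofReal_re, Complex.ofReal_im]
    ring
  -- rewrite the double integral
  have key : (2:ℝ) * (∫ y in (0:ℝ)..L, ∫ z in (0:ℝ)..y,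
        xi y * eta z * ((starRingEnd ℂ) (g z) * g y).re)
      = ∫ y in (0:ℝ)..L, R y * φd y := by
    rw [← intervalIntegral.integral_const_mul]
    apply intervalIntegral.integral_congr
    intro y hy
    rw [Set.uIcc_of_le hL'] at hy
    dsimp only
    rw [inner_eq y hy]
    ring
  rw [key]
  -- integration by parts
  have parts : (∫ y in (0:ℝ)..L, R y * φd y)
      = R L * φ L - R 0 * φ 0 - ∫ y in (0:ℝ)..L, R' y * φ y := by
    apply intervalIntegral.integral_mul_deriv_eq_deriv_mul
    · intro x hx
      rw [Set.uIcc_of_le hL'] at hx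
      exact hR x hx
    · intro x _
      exact hφ_deriv x
    · apply ContinuousOn.intervalIntegrable
      rw [Set.uIcc_of_le hL']
      exact hR'
    · exact hφd_cont.intervalIntegrable _ _
  rw [parts]
  have hφ0 : φ 0 = 0 := by
    simp [hφ_def, hF_def]
  have h1 : R L * φ L ≤ 0 :=
    mul_nonpos_of_nonpos_of_nonneg hRL (Complex.normSq_nonneg _)
  have h2 : 0 ≤ ∫ y in (0:ℝ)..L, R' y * φ y := by
    apply intervalIntegral.integral_nonneg hL'
    intro x hx
    exact mul_nonneg (hmono x hx) (Complex.normSq_nonneg _)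
  rw [hφ0]
  linarith
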